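/- For all integers k ≥ 1 and j ≥ 1, the generalized transformation coefficients satisfy S(k, j) = (j+1) · Σ_{i=0}^{j−1} (−1)^{j−1−i} · H_{i+1}^{(k)} / ((j−1−i)! · (i+2)!). -/

import Mathlib

open Finset

lemma factR_ne (n : ℕ) : ((Nat.factorial n : ℕ) : ℝ) ≠ 0 := by
  exact_mod_cast Nat.factorial_ne_zero n

lemma core (j d : ℕ) (hd : 1 ≤ d) (hdj : d ≤ j + 1) :
    ∑ t ∈ Finset.range d, (-1:ℝ)^t / ((Nat.factorial t : ℝ) * (Nat.factorial (j+1-t) : ℝ))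
      = (-1:ℝ)^(d-1) * (Nat.choose j (d-1) : ℝ) / (Nat.factorial (j+1) : ℝ) := by
  induction d with
  | zero => omega
  | succ d ih =>
    rcases Nat.eq_zero_or_pos d with rfl | hd1
    · simp
    · have hdj' : d ≤ j := by omega
      rw [Finset.sum_range_succ, ih hd1 (by omega)]
      obtain ⟨e, rfl⟩ : ∃ e, d = e + 1 := ⟨d - 1, by omega⟩
      have h1 : Nat.choose (j+1) (e+1) * Nat.factorial (e+1) * Nat.factorial (j - e)
          = Nat.factorial (j+1) := by
        have := Nat.choose_mul_factorial_mul_factorial (show e+1 ≤ j+1 by omega)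
        simpa [Nat.succ_sub_succ] using this
      have h2 : Nat.choose (j+1) (e+1) = Nat.choose j e + Nat.choose j (e+1) :=
        Nat.choose_succ_succ j e
      have h1' : ((Nat.choose (j+1) (e+1) : ℝ)) * (Nat.factorial (e+1) : ℝ) * (Nat.factorial (j-e) : ℝ)
          = (Nat.factorial (j+1) : ℝ) := by exact_mod_cast h1
      have h2' : ((Nat.choose (j+1) (e+1) : ℝ)) = (Nat.choose j e : ℝ) + (Nat.choose j (e+1) : ℝ) := by
        exact_mod_cast h2
      have hs : j + 1 - (e+1) = j - e := by omega
      simp only [Nat.add_sub_cancel, hs]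
      have hAB : ((Nat.factorial (e+1) : ℝ) * (Nat.factorial (j-e) : ℝ)) ≠ 0 :=
        mul_ne_zero (factR_ne _) (factR_ne _)
      have hC := factR_ne (j+1)
      have hinv : (1:ℝ) / ((Nat.factorial (e+1) : ℝ) * (Nat.factorial (j-e) : ℝ))
          = (Nat.choose (j+1) (e+1) : ℝ) / (Nat.factorial (j+1) : ℝ) := by
        rw [div_eq_div_iff hAB hC]; linear_combination -h1'
      rw [show (-1:ℝ)^(e+1) / ((Nat.factorial (e+1) : ℝ) * (Nat.factorial (j-e) : ℝ))
            = (-1:ℝ)^(e+1) * ((1:ℝ) / ((Nat.factorial (e+1) : ℝ) * (Nat.factorial (j-e) : ℝ))) by ring,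
        hinv, h2']
      ring

lemma innerSumAux (j m : ℕ) (h : m < j) :
    ∑ i ∈ Finset.Ico m j, (-1:ℝ)^(j-1-i) / ((Nat.factorial (j-1-i) : ℝ) * (Nat.factorial (i+2) : ℝ))
      = (-1:ℝ)^(j-1-m) * (Nat.choose j (m+1) : ℝ) / (Nat.factorial (j+1) : ℝ) := by
  rw [Finset.sum_Ico_eq_sum_range, ← Finset.sum_range_reflect]
  have step : ∀ t ∈ Finset.range (j - m),
      (-1:ℝ)^(j-1-(m + (j - m - 1 - t))) /
        ((Nat.factorial (j-1-(m + (j - m - 1 - t))) : ℝ) * (Nat.factorial ((m + (j - m - 1 - t))+2) : ℝ))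
      = (-1:ℝ)^t / ((Nat.factorial t : ℝ) * (Nat.factorial (j+1-t) : ℝ)) := by
    intro t ht
    rw [Finset.mem_range] at ht
    have e1 : j - 1 - (m + (j - m - 1 - t)) = t := by omega
    have e2 : (m + (j - m - 1 - t)) + 2 = j + 1 - t := by omega
    rw [e1, e2]
  rw [Finset.sum_congr rfl step, core j (j - m) (by omega) (by omega)]
  have e3 : j - m - 1 = j - 1 - m := by omega
  have e4 : Nat.choose j (j - m - 1) = Nat.choose j (m+1) := by
    rw [show j - m - 1 = j - (m+1) by omega, Nat.choose_symm (by omega)]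
  rw [e4, e3]




/-- The generalized transformation coefficient
`S k j = (1/j!) · Σ_{m=1}^{j} C(j,m) · (−1)^{j−m} · m^{−k}`. -/
noncomputable def S (k j : ℕ) : ℝ :=
  (1 / (Nat.factorial j : ℝ)) *
    ∑ m ∈ Finset.Icc 1 j, (Nat.choose j m : ℝ) * (-1 : ℝ) ^ (j - m) / (m : ℝ) ^ k

/-- The `r`-order harmonic number `H r n = Σ_{m=1}^{n} 1/m^r`. -/
noncomputable def H (r n : ℕ) : ℝ :=
  ∑ m ∈ Finset.Icc 1 n, 1 / (m : ℝ) ^ r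

theorem stmt_7 (k j : ℕ) (hk : 1 ≤ k) (hj : 1 ≤ j) :
    S k j = ((j : ℝ) + 1) *
      ∑ i ∈ Finset.range j, (-1 : ℝ) ^ (j - 1 - i) * H k (i + 1)
        / ((Nat.factorial (j - 1 - i) : ℝ) * (Nat.factorial (i + 2) : ℝ)) := by
  -- rewrite H as a sum over range, split the double sum
  have hH : ∀ i : ℕ, H k (i+1) = ∑ m ∈ Finset.range (i+1), 1 / ((m:ℝ)+1) ^ k := by
    intro i
    rw [H, show Finset.Icc 1 (i+1) = Finset.Ico 1 (i+2) from (Finset.Ico_add_one_right_eq_Icc 1 (i+1)).symm,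
      Finset.sum_Ico_eq_sum_range]
    simp only [Nat.add_sub_cancel, show i + 2 - 1 = i + 1 by omega]
    apply Finset.sum_congr rfl
    intro m _
    push_cast
    ring
  set g : ℕ → ℕ → ℝ := fun m i => (1/((m:ℝ)+1)^k) *
    ((-1:ℝ)^(j-1-i) / ((Nat.factorial (j-1-i):ℝ) * (Nat.factorial (i+2):ℝ))) with hg
  have swap :
      ∑ i ∈ Finset.range j, (-1:ℝ)^(j-1-i) * H k (i+1)
          / ((Nat.factorial (j-1-i):ℝ) * (Nat.factorial (i+2):ℝ))
        = ∑ m ∈ Finset.range j, (1/((m:ℝ)+1)^k) *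
            ((-1:ℝ)^(j-1-m) * (Nat.choose j (m+1):ℝ) / (Nat.factorial (j+1):ℝ)) := by
    calc ∑ i ∈ Finset.range j, (-1:ℝ)^(j-1-i) * H k (i+1)
            / ((Nat.factorial (j-1-i):ℝ) * (Nat.factorial (i+2):ℝ))
        = ∑ i ∈ Finset.Ico 0 j, ∑ m ∈ Finset.Ico 0 (i+1), g m i := by
          simp only [Nat.Ico_zero_eq_range]
          apply Finset.sum_congr rfl
          intro i _
          rw [hH i, mul_div_assoc, Finset.sum_div, Finset.mul_sum]
          apply Finset.sum_congr rfl
          intro m _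
          simp only [hg]
          ring
      _ = ∑ m ∈ Finset.Ico 0 j, ∑ i ∈ Finset.Ico m j, g m i :=
          (Finset.sum_Ico_Ico_comm 0 j g).symm
      _ = ∑ m ∈ Finset.range j, (1/((m:ℝ)+1)^k) *
            ((-1:ℝ)^(j-1-m) * (Nat.choose j (m+1):ℝ) / (Nat.factorial (j+1):ℝ)) := by
          rw [Nat.Ico_zero_eq_range]
          apply Finset.sum_congr rfl
          intro m hm
          rw [Finset.mem_range] at hm
          simp only [hg]
          rw [← Finset.mul_sum, innerSumAux j m hm]
  have hL : ∑ m ∈ Finset.Icc 1 j, (Nat.choose j m : ℝ) * (-1:ℝ)^(j-m) / (m:ℝ)^k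
      = ∑ m ∈ Finset.range j, (Nat.choose j (m+1) : ℝ) * (-1:ℝ)^(j-1-m) / ((m:ℝ)+1)^k := by
    rw [show Finset.Icc 1 j = Finset.Ico 1 (j+1) by rw [Finset.Ico_add_one_right_eq_Icc],
      Finset.sum_Ico_eq_sum_range]
    simp only [Nat.add_sub_cancel]
    apply Finset.sum_congr rfl
    intro m hm
    rw [Finset.mem_range] at hm
    rw [add_comm 1 m, show j - (m+1) = j - 1 - m by omega]
    push_cast
    ring
  rw [S, hL, swap, Finset.mul_sum, Finset.mul_sum]
  apply Finset.sum_congr rfl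
  intro m _
  have hfact : (Nat.factorial (j+1) : ℝ) = ((j:ℝ)+1) * (Nat.factorial j : ℝ) := by
    rw [Nat.factorial_succ]; push_cast; ring
  rw [hfact]
  have h1 := factR_ne j
  have h2 : ((m:ℝ)+1)^k ≠ 0 := by positivity
  have h3 : ((j:ℝ)+1) ≠ 0 := by positivity
  field_simp
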